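/- Let ε > 0, 0 ≤ a < b < ∞, and let ρ : [a, b] → (0, ∞) be a Borel function such that the essential supremum (with respect to Lebesgue measure) of e^{-εt} ρ(t)^{-1} over [a, b] is infinite. Then there exists a Borel function h : [a, b] → [0, ∞) such that ∫_a^b h(t) ρ(t) dt < ∞ and ∫_a^b h(t) e^{-εt} dt = ∞. -/

import Mathlib

open MeasureTheory
open scoped ENNReal

/-- (case p = 1) if the essential supremum of `e^{-εt} ρ(t)^{-1}` over
`[a, b]` is infinite, there is a nonnegative Borel function `h` with
`∫_a^b h ρ < ∞` and `∫_a^b h e^{-εt} = ∞`. -/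
theorem stmt_8 (ε a b : ℝ) (hε : 0 < ε) (ha : 0 ≤ a) (hab : a < b)
    (ρ : ℝ → ℝ) (hρmeas : Measurable ρ) (hρpos : ∀ t ∈ Set.Icc a b, 0 < ρ t)
    (hess : essSup (fun t => ENNReal.ofReal (Real.exp (-(ε * t)) / ρ t))
        (volume.restrict (Set.Icc a b)) = ⊤) :
    ∃ h : ℝ → ℝ, Measurable h ∧ (∀ t, 0 ≤ h t) ∧
      (∫⁻ t in Set.Icc a b, ENNReal.ofReal (h t * ρ t) < ⊤) ∧
      ∫⁻ t in Set.Icc a b, ENNReal.ofReal (h t * Real.exp (-(ε * t))) = ⊤ := by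
  set μ := volume.restrict (Set.Icc a b) with hμ
  set f : ℝ → ℝ≥0∞ := fun t => ENNReal.ofReal (Real.exp (-(ε * t)) / ρ t) with hfdef
  have hexp_meas : Measurable fun t : ℝ => Real.exp (-(ε * t)) :=
    Real.measurable_exp.comp ((measurable_const.mul measurable_id).neg)
  have hfmeas : Measurable f := (hexp_meas.div hρmeas).ennreal_ofReal
  -- the sets
  set E : ℕ → Set ℝ := fun n => Set.Icc a b ∩ {t | 2 ^ n < f t} with hEdef
  have hEmeas : ∀ n, MeasurableSet (E n) := fun n =>
    measurableSet_Icc.inter (measurableSet_lt measurable_const hfmeas)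
  have hEsub : ∀ n, E n ⊆ Set.Icc a b := fun n => Set.inter_subset_left
  set m : ℕ → ℝ≥0∞ := fun n => volume (E n) with hmdef
  have hμE : ∀ n, μ (E n) = m n := by
    intro n
    rw [hμ, Measure.restrict_apply (hEmeas n),
      Set.inter_eq_self_of_subset_left (hEsub n)]
  have hm_pos : ∀ n, m n ≠ 0 := by
    intro n hm0
    have h0 : μ {t | 2 ^ n < f t} = 0 := by
      rw [hμ, Measure.restrict_apply (measurableSet_lt measurable_const hfmeas)]
      rw [Set.inter_comm]
      exact hm0
    have hae : f ≤ᵐ[μ] fun _ => (2 : ℝ≥0∞) ^ n := by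
      rw [Filter.EventuallyLE, ae_iff]
      simpa [not_le] using h0
    have := essSup_le_of_ae_le _ hae
    rw [hess] at this
    exact absurd (lt_of_le_of_lt this (by simp [lt_top_iff_ne_top] :
      (2 : ℝ≥0∞) ^ n < ⊤)) (lt_irrefl _)
  have hm_top : ∀ n, m n ≠ ⊤ := by
    intro n
    have : m n ≤ volume (Set.Icc a b) := measure_mono (hEsub n)
    exact ne_top_of_le_ne_top (by simp [Real.volume_Icc]) this
  set c : ℕ → ℝ≥0∞ := fun n => ((2 : ℝ≥0∞) ^ n * m n)⁻¹ with hcdef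
  have h2n_ne_top : ∀ n : ℕ, (2 : ℝ≥0∞) ^ n ≠ ⊤ := fun n => by simp
  have h2n_ne_zero : ∀ n : ℕ, (2 : ℝ≥0∞) ^ n ≠ 0 := fun n => by positivity
  set H : ℝ → ℝ≥0∞ := fun t =>
    ∑' n, (E n).indicator (fun t => c n * (ENNReal.ofReal (ρ t))⁻¹) t with hHdef
  have hterm_meas : ∀ n, Measurable fun t =>
      (E n).indicator (fun t => c n * (ENNReal.ofReal (ρ t))⁻¹) t := fun n =>
    (measurable_const.mul hρmeas.ennreal_ofReal.inv).indicator (hEmeas n)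
  have hHmeas : Measurable H := Measurable.ennreal_tsum hterm_meas
  -- first integral: ∫ H * ofReal ρ = 2
  have hint1 : ∫⁻ t, H t * ENNReal.ofReal (ρ t) ∂μ = 2 := by
    have : ∀ t, H t * ENNReal.ofReal (ρ t) =
        ∑' n, (E n).indicator (fun t => c n * (ENNReal.ofReal (ρ t))⁻¹) t
          * ENNReal.ofReal (ρ t) := fun t => ENNReal.tsum_mul_right.symm
    simp_rw [this]
    rw [lintegral_tsum (f := fun n t => (E n).indicator (fun t => c n * (ENNReal.ofReal (ρ t))⁻¹) t * ENNReal.ofReal (ρ t)) (fun n => ((hterm_meas n).mul hρmeas.ennreal_ofReal).aemeasurable)]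
    have hterm : ∀ n, ∫⁻ t, (E n).indicator
        (fun t => c n * (ENNReal.ofReal (ρ t))⁻¹) t * ENNReal.ofReal (ρ t) ∂μ
        = (2 : ℝ≥0∞)⁻¹ ^ n := by
      intro n
      have heq : ∀ t, (E n).indicator (fun t => c n * (ENNReal.ofReal (ρ t))⁻¹) t
          * ENNReal.ofReal (ρ t) = (E n).indicator (fun _ => c n) t := by
        intro t
        by_cases ht : t ∈ E n
        · have hρt : 0 < ρ t := hρpos t (hEsub n ht)
          rw [Set.indicator_of_mem ht, Set.indicator_of_mem ht, mul_assoc,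
            ENNReal.inv_mul_cancel (by simpa [ENNReal.ofReal_pos] using hρt)
              ENNReal.ofReal_ne_top, mul_one]
        · rw [Set.indicator_of_notMem ht, Set.indicator_of_notMem ht, zero_mul]
      simp_rw [heq]
      rw [lintegral_indicator (hEmeas n) _, setLIntegral_const, hμE n]
      show ((2:ℝ≥0∞) ^ n * m n)⁻¹ * m n = (2:ℝ≥0∞)⁻¹ ^ n
      rw [ENNReal.mul_inv (Or.inl (h2n_ne_zero n)) (Or.inl (h2n_ne_top n)),
        mul_assoc, ENNReal.inv_mul_cancel (hm_pos n) (hm_top n), mul_one,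
        ← ENNReal.inv_pow]
    simp_rw [hterm]
    rw [ENNReal.tsum_geometric, ENNReal.one_sub_inv_two]
    norm_num
  -- second integral: ∫ H * ofReal exp = ⊤
  have hint2 : ∫⁻ t, H t * ENNReal.ofReal (Real.exp (-(ε * t))) ∂μ = ⊤ := by
    have : ∀ t, H t * ENNReal.ofReal (Real.exp (-(ε * t))) =
        ∑' n, (E n).indicator (fun t => c n * (ENNReal.ofReal (ρ t))⁻¹) t
          * ENNReal.ofReal (Real.exp (-(ε * t))) := fun t => ENNReal.tsum_mul_right.symm
    simp_rw [this]
    rw [lintegral_tsum (f := fun n t => (E n).indicator (fun t => c n * (ENNReal.ofReal (ρ t))⁻¹) t * ENNReal.ofReal (Real.exp (-(ε * t)))) (fun n => ((hterm_meas n).mul hexp_meas.ennreal_ofReal).aemeasurable)]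
    rw [eq_top_iff]
    calc (⊤ : ℝ≥0∞) = ∑' _ : ℕ, (1 : ℝ≥0∞) := (ENNReal.tsum_const_eq_top_of_ne_zero one_ne_zero).symm
    _ ≤ _ := by
        apply ENNReal.tsum_le_tsum
        intro n
        have hge : ∀ t, (E n).indicator (fun _ => c n * 2 ^ n) t ≤
            (E n).indicator (fun t => c n * (ENNReal.ofReal (ρ t))⁻¹) t
              * ENNReal.ofReal (Real.exp (-(ε * t))) := by
          intro t
          by_cases ht : t ∈ E n
          · have hρt : 0 < ρ t := hρpos t (hEsub n ht)
            have hft : (2 : ℝ≥0∞) ^ n < f t := ht.2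
            have hf_eq : f t = ENNReal.ofReal (Real.exp (-(ε * t)))
                * (ENNReal.ofReal (ρ t))⁻¹ := by
              show ENNReal.ofReal (Real.exp (-(ε * t)) / ρ t) = _
              rw [ENNReal.ofReal_div_of_pos hρt, ENNReal.div_eq_inv_mul, mul_comm]
            rw [Set.indicator_of_mem ht, Set.indicator_of_mem ht, mul_assoc, mul_comm
              ((ENNReal.ofReal (ρ t))⁻¹), ← hf_eq]
            exact mul_le_mul_right hft.le _
          · rw [Set.indicator_of_notMem ht]; exact zero_le
        calc (1 : ℝ≥0∞) = c n * 2 ^ n * m n := by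
              show (1:ℝ≥0∞) = ((2:ℝ≥0∞) ^ n * m n)⁻¹ * 2 ^ n * m n
              rw [mul_assoc, ENNReal.inv_mul_cancel
                (mul_ne_zero (h2n_ne_zero n) (hm_pos n))
                (ENNReal.mul_ne_top (h2n_ne_top n) (hm_top n))]
        _ = ∫⁻ t, (E n).indicator (fun _ => c n * 2 ^ n) t ∂μ := by
              rw [lintegral_indicator (hEmeas n) _, setLIntegral_const, hμE n]
        _ ≤ _ := lintegral_mono hge
  -- a.e. finiteness of H on Icc
  have hfin : ∀ᵐ t ∂μ, H t ≠ ⊤ := by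
    have h1 : ∀ᵐ t ∂μ, H t * ENNReal.ofReal (ρ t) ≠ ⊤ :=
      ae_lt_top (hHmeas.mul hρmeas.ennreal_ofReal) (by show ∫⁻ t, H t * ENNReal.ofReal (ρ t) ∂μ ≠ ⊤; rw [hint1]; exact (by simp))
        |>.mono fun t ht => ht.ne
    have h2 : ∀ᵐ t ∂μ, t ∈ Set.Icc a b := ae_restrict_mem measurableSet_Icc
    filter_upwards [h1, h2] with t ht1 ht2
    intro htop
    apply ht1
    rw [htop, ENNReal.top_mul (by simpa [ENNReal.ofReal_pos] using hρpos t ht2)]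
  refine ⟨fun t => (H t).toReal, hHmeas.ennreal_toReal, fun t => ENNReal.toReal_nonneg, ?_, ?_⟩
  · have hcongr : (fun t => ENNReal.ofReal ((H t).toReal * ρ t)) =ᵐ[μ]
        fun t => H t * ENNReal.ofReal (ρ t) := by
      filter_upwards [hfin] with t ht
      rw [ENNReal.ofReal_mul ENNReal.toReal_nonneg, ENNReal.ofReal_toReal ht]
    rw [lintegral_congr_ae hcongr, hint1]
    exact (by simp)
  · have hcongr : (fun t => ENNReal.ofReal ((H t).toReal * Real.exp (-(ε * t)))) =ᵐ[μ]
        fun t => H t * ENNReal.ofReal (Real.exp (-(ε * t))) := by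
      filter_upwards [hfin] with t ht
      rw [ENNReal.ofReal_mul ENNReal.toReal_nonneg, ENNReal.ofReal_toReal ht]
    rw [lintegral_congr_ae hcongr, hint2]
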